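/- Let A and B be groups, solvable of derived length m and n respectively, and let k ≥ 1. Then the k-solvable product A ∗_{s_k} B is a solvable group of derived length at most max{k, m, n}. -/

import Mathlib

open Monoid
open scoped commutatorElement

/-- The verbal subgroup `W(G)`: the subgroup of `G` generated by all evaluations of the
words of `W` at tuples of elements of `G`. -/
def verbalSubgroup (W : Set (FreeGroup ℕ)) (G : Type*) [Group G] : Subgroup G :=
  Subgroup.closure {x | ∃ w ∈ W, ∃ f : ℕ → G, FreeGroup.lift f w = x}

theorem lift_comp_eval {G H : Type*} [Group G] [Group H] (φ : G →* H) (f : ℕ → G)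
    (w : FreeGroup ℕ) : φ (FreeGroup.lift f w) = FreeGroup.lift (φ ∘ f) w := by
  have h : φ.comp (FreeGroup.lift f) = FreeGroup.lift (φ ∘ f) :=
    FreeGroup.ext_hom _ _ (fun a => by simp)
  exact DFunLike.congr_fun h w

theorem verbalSubgroup_map_le {G H : Type*} [Group G] [Group H] (W : Set (FreeGroup ℕ))
    (φ : G →* H) : (verbalSubgroup W G).map φ ≤ verbalSubgroup W H := by
  rw [verbalSubgroup, MonoidHom.map_closure, Subgroup.closure_le]
  rintro x ⟨y, ⟨w, hw, f, rfl⟩, rfl⟩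
  exact Subgroup.subset_closure ⟨w, hw, φ ∘ f, (lift_comp_eval φ f w).symm⟩

/-- Verbal subgroups are normal. -/
instance verbalSubgroup_normal (W : Set (FreeGroup ℕ)) (G : Type*) [Group G] :
    (verbalSubgroup W G).Normal := by
  constructor
  intro n hn g
  have h := verbalSubgroup_map_le (G := G) (H := G) W (MulAut.conj g).toMonoidHom
  have h2 : (MulAut.conj g).toMonoidHom n ∈ verbalSubgroup W G := h ⟨n, hn, rfl⟩
  simpa using h2

/-- The subgroup `[A,B]` of the free product `A ∗ B` generated by the commutators
`[a,b] = a * b * a⁻¹ * b⁻¹` with `a ∈ A`, `b ∈ B`. -/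
def commSubgroup (A B : Type*) [Group A] [Group B] : Subgroup (Coprod A B) :=
  Subgroup.closure {x | ∃ (a : A) (b : B), x = ⁅(Coprod.inl a : Coprod A B), Coprod.inr b⁆}

/-- The kernel of the verbal product: (the normal closure of) `W(A ∗ B) ∩ [A,B]`.
Since `W(A ∗ B) ∩ [A,B]` is in fact a normal subgroup of `A ∗ B`, taking the normal
closure does not change the subgroup. -/
def verbalProductKer (W : Set (FreeGroup ℕ)) (A B : Type*) [Group A] [Group B] :
    Subgroup (Coprod A B) :=
  Subgroup.normalClosure ((verbalSubgroup W (Coprod A B) ⊓ commSubgroup A B : Subgroup _) : Set _)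

instance verbalProductKer_normal (W : Set (FreeGroup ℕ)) (A B : Type*) [Group A] [Group B] :
    (verbalProductKer W A B).Normal := Subgroup.normalClosure_normal

/-- The verbal product `A ∗_W B := (A ∗ B)/(W(A ∗ B) ∩ [A,B])`. -/
abbrev VerbalProduct (W : Set (FreeGroup ℕ)) (A B : Type*) [Group A] [Group B] : Type _ :=
  Coprod A B ⧸ verbalProductKer W A B

/-- The quotient homomorphism `q : A ∗ B → A ∗_W B`. -/
def vq (W : Set (FreeGroup ℕ)) (A B : Type*) [Group A] [Group B] :
    Coprod A B →* VerbalProduct W A B :=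
  QuotientGroup.mk' (verbalProductKer W A B)

/-- The copy of `A` inside the verbal product `A ∗_W B`. -/
def vinl (W : Set (FreeGroup ℕ)) (A B : Type*) [Group A] [Group B] :
    A →* VerbalProduct W A B := (vq W A B).comp Coprod.inl

/-- The copy of `B` inside the verbal product `A ∗_W B`. -/
def vinr (W : Set (FreeGroup ℕ)) (A B : Type*) [Group A] [Group B] :
    B →* VerbalProduct W A B := (vq W A B).comp Coprod.inr

/-- `[A,B]^w`, the image of `[A,B]` in the verbal product `A ∗_W B`. -/
def commW (W : Set (FreeGroup ℕ)) (A B : Type*) [Group A] [Group B] :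
    Subgroup (VerbalProduct W A B) := (commSubgroup A B).map (vq W A B)

/-- The words `s_k` defining solvable products: `s_1 = [x_1, x_2]` and
`s_k(x_1, …, x_{2^k}) = [s_{k-1}(x_1, …, x_{2^{k-1}}), s_{k-1}(x_{2^{k-1}+1}, …, x_{2^k})]`
(generators indexed from `0`; the second factor is obtained by shifting the generators
by `2^{k-1}`). -/
def sWord : ℕ → FreeGroup ℕ
  | 0 => 1
  | 1 => ⁅FreeGroup.of 0, FreeGroup.of 1⁆
  | (k + 2) => ⁅sWord (k + 1),
      FreeGroup.lift (fun i => FreeGroup.of (i + 2 ^ (k + 1))) (sWord (k + 1))⁆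

section Aux

variable {G : Type*} [Group G]

theorem shift_lt {k i : ℕ} (hi : i < 2 ^ (k + 1)) : i + 2 ^ (k + 1) < 2 ^ (k + 2) := by
  have : 2 ^ (k + 1) + 2 ^ (k + 1) = 2 ^ (k + 2) := by ring
  omega

theorem sWord_lift_congr : ∀ (k : ℕ) (f g : ℕ → G), (∀ i < 2 ^ k, f i = g i) →
    FreeGroup.lift f (sWord k) = FreeGroup.lift g (sWord k)
  | 0, f, g, _ => by simp [sWord]
  | 1, f, g, h => by
      simp only [sWord, map_commutatorElement, FreeGroup.lift_apply_of]
      rw [h 0 (by norm_num), h 1 (by norm_num)]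
  | (k + 2), f, g, h => by
      have h1 : ∀ i < 2 ^ (k + 1), f i = g i := fun i hi =>
        h i (lt_of_lt_of_le hi (Nat.pow_le_pow_right (by norm_num) (by omega)))
      have h2 : ∀ i < 2 ^ (k + 1), f (i + 2 ^ (k + 1)) = g (i + 2 ^ (k + 1)) := fun i hi =>
        h _ (shift_lt hi)
      simp only [sWord, map_commutatorElement, lift_comp_eval]
      have e1 : (⇑(FreeGroup.lift f) ∘ fun i => FreeGroup.of (i + 2 ^ (k + 1)))
          = fun i => f (i + 2 ^ (k + 1)) := funext fun i => FreeGroup.lift_apply_of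
      have e2 : (⇑(FreeGroup.lift g) ∘ fun i => FreeGroup.of (i + 2 ^ (k + 1)))
          = fun i => g (i + 2 ^ (k + 1)) := funext fun i => FreeGroup.lift_apply_of
      rw [e1, e2, sWord_lift_congr (k + 1) f g h1,
        sWord_lift_congr (k + 1) _ _ h2]

theorem mem_verbal (w : FreeGroup ℕ) (f : ℕ → G) :
    FreeGroup.lift f w ∈ verbalSubgroup {w} G :=
  Subgroup.subset_closure ⟨w, rfl, f, rfl⟩

theorem commutator_lift_mem (k : ℕ) (hk : 1 ≤ k) (f g : ℕ → G) :
    ⁅FreeGroup.lift f (sWord k), FreeGroup.lift g (sWord k)⁆ ∈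
      verbalSubgroup {sWord (k + 1)} G := by
  obtain ⟨t, rfl⟩ : ∃ t, k = t + 1 := ⟨k - 1, by omega⟩
  set F : ℕ → G := fun i => if i < 2 ^ (t + 1) then f i else g (i - 2 ^ (t + 1)) with hF
  have key : FreeGroup.lift F (sWord (t + 2)) =
      ⁅FreeGroup.lift f (sWord (t + 1)), FreeGroup.lift g (sWord (t + 1))⁆ := by
    simp only [sWord, map_commutatorElement, lift_comp_eval]
    have e1 : (⇑(FreeGroup.lift F) ∘ fun i => FreeGroup.of (i + 2 ^ (t + 1)))
        = fun i => F (i + 2 ^ (t + 1)) := funext fun i => FreeGroup.lift_apply_of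
    rw [e1, sWord_lift_congr (t + 1) F f (fun i hi => by simp [hF, hi]),
      sWord_lift_congr (t + 1) (fun i => F (i + 2 ^ (t + 1))) g (fun i hi => by simp [hF])]
  exact key ▸ mem_verbal (sWord (t + 2)) F

theorem comm_mem_verbal_succ (k : ℕ) (hk : 1 ≤ k) {x y : G}
    (hx : x ∈ verbalSubgroup {sWord k} G) (hy : y ∈ verbalSubgroup {sWord k} G) :
    ⁅x, y⁆ ∈ verbalSubgroup {sWord (k + 1)} G := by
  rw [verbalSubgroup] at hx hy
  induction hx, hy using Subgroup.closure_induction₂ with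
  | mem x y hx hy =>
      obtain ⟨w, hw, f, rfl⟩ := hx
      obtain ⟨w', hw', g, rfl⟩ := hy
      rw [Set.mem_singleton_iff] at hw hw'
      subst hw; subst hw'
      exact commutator_lift_mem k hk f g
  | one_left x hx => rw [commutatorElement_one_left]; exact one_mem _
  | one_right x hx => rw [commutatorElement_one_right]; exact one_mem _
  | mul_left x y z hx hy hz h1 h2 =>
      have : ⁅x * y, z⁆ = x * ⁅y, z⁆ * x⁻¹ * ⁅x, z⁆ := by
        simp only [commutatorElement_def]; group
      rw [this]
      exact mul_mem ((verbalSubgroup_normal _ G).conj_mem _ h2 x) h1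
  | mul_right y z x hy hz hx h1 h2 =>
      have : ⁅x, y * z⁆ = ⁅x, y⁆ * (y * ⁅x, z⁆ * y⁻¹) := by
        simp only [commutatorElement_def]; group
      rw [this]
      exact mul_mem h1 ((verbalSubgroup_normal _ G).conj_mem _ h2 y)
  | inv_left x y hx hy h1 =>
      have : ⁅x⁻¹, y⁆ = x⁻¹ * ⁅x, y⁆⁻¹ * x⁻¹⁻¹ := by
        simp only [commutatorElement_def]; group
      rw [this]
      exact (verbalSubgroup_normal _ G).conj_mem _ (inv_mem h1) x⁻¹
  | inv_right x y hx hy h1 =>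
      have : ⁅x, y⁻¹⁆ = y⁻¹ * ⁅x, y⁆⁻¹ * y⁻¹⁻¹ := by
        simp only [commutatorElement_def]; group
      rw [this]
      exact (verbalSubgroup_normal _ G).conj_mem _ (inv_mem h1) y⁻¹

theorem derivedSeries_le_verbal : ∀ (k : ℕ), 1 ≤ k →
    derivedSeries G k ≤ verbalSubgroup {sWord k} G
  | 1, _ => by
      rw [derivedSeries_succ, derivedSeries_zero, Subgroup.commutator_le]
      intro g _ h _
      have : ⁅g, h⁆ = FreeGroup.lift (fun i => if i = 0 then g else h) (sWord 1) := by
        simp [sWord, map_commutatorElement]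
      rw [this]
      exact mem_verbal _ _
  | (k + 2), _ => by
      rw [derivedSeries_succ, Subgroup.commutator_le]
      intro x hx y hy
      exact comm_mem_verbal_succ (k + 1) (by omega)
        (derivedSeries_le_verbal (k + 1) (by omega) hx)
        (derivedSeries_le_verbal (k + 1) (by omega) hy)

theorem derivedSeries_antitone' {m l : ℕ} (h : m ≤ l) :
    derivedSeries G l ≤ derivedSeries G m := by
  induction l with
  | zero =>
      obtain rfl : m = 0 := Nat.le_zero.mp h
      exact le_rfl
  | succ l ih =>
      rcases Nat.eq_or_lt_of_le h with rfl | h'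
      · exact le_rfl
      · refine le_trans ?_ (ih (by omega))
        rw [derivedSeries_succ]
        haveI := derivedSeries_normal G l
        exact Subgroup.commutator_le_left _ _

variable {A B : Type*} [Group A] [Group B]

theorem conj_map_comm_le (g : Coprod A B)
    (hg : ∀ a b, (MulAut.conj g) ⁅(Coprod.inl a : Coprod A B), Coprod.inr b⁆ ∈ commSubgroup A B) :
    ∀ n ∈ commSubgroup A B, g * n * g⁻¹ ∈ commSubgroup A B := by
  have hle : (commSubgroup A B).map (MulAut.conj g).toMonoidHom ≤ commSubgroup A B := by
    rw [commSubgroup, MonoidHom.map_closure, Subgroup.closure_le]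
    rintro x ⟨y, ⟨a, b, rfl⟩, rfl⟩
    exact hg a b
  intro n hn
  have h2 := hle ⟨n, hn, rfl⟩
  simpa using h2

instance commSubgroup_normal : (commSubgroup A B).Normal := by
  rw [← Subgroup.normalizer_eq_top_iff, ← top_le_iff, ← Coprod.closure_range_inl_union_inr,
    Subgroup.closure_le]
  rintro g (⟨a, rfl⟩ | ⟨b, rfl⟩) <;> rw [SetLike.mem_coe, Subgroup.mem_normalizer_iff]
  · intro n
    constructor
    · exact conj_map_comm_le (Coprod.inl a) (fun a' b => by
        have : (MulAut.conj (Coprod.inl a : Coprod A B)) ⁅(Coprod.inl a' : Coprod A B), Coprod.inr b⁆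
            = ⁅(Coprod.inl (a * a') : Coprod A B), Coprod.inr b⁆ *
              ⁅(Coprod.inl a : Coprod A B), Coprod.inr b⁆⁻¹ := by
          simp only [MulAut.conj_apply, commutatorElement_def, map_mul]
          group
        rw [this]
        exact mul_mem (Subgroup.subset_closure ⟨_, _, rfl⟩)
          (inv_mem (Subgroup.subset_closure ⟨_, _, rfl⟩))) n
    · intro h
      have := conj_map_comm_le (Coprod.inl a⁻¹) (fun a' b => by
        have : (MulAut.conj (Coprod.inl a⁻¹ : Coprod A B)) ⁅(Coprod.inl a' : Coprod A B), Coprod.inr b⁆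
            = ⁅(Coprod.inl (a⁻¹ * a') : Coprod A B), Coprod.inr b⁆ *
              ⁅(Coprod.inl a⁻¹ : Coprod A B), Coprod.inr b⁆⁻¹ := by
          simp only [MulAut.conj_apply, commutatorElement_def, map_mul]
          group
        rw [this]
        exact mul_mem (Subgroup.subset_closure ⟨_, _, rfl⟩)
          (inv_mem (Subgroup.subset_closure ⟨_, _, rfl⟩))) _ h
      simpa [mul_assoc] using this
  · intro n
    constructor
    · exact conj_map_comm_le (Coprod.inr b) (fun a b' => by
        have : (MulAut.conj (Coprod.inr b : Coprod A B)) ⁅(Coprod.inl a : Coprod A B), Coprod.inr b'⁆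
            = ⁅(Coprod.inl a : Coprod A B), Coprod.inr b⁆⁻¹ *
              ⁅(Coprod.inl a : Coprod A B), Coprod.inr (b * b')⁆ := by
          simp only [MulAut.conj_apply, commutatorElement_def, map_mul]
          group
        rw [this]
        exact mul_mem (inv_mem (Subgroup.subset_closure ⟨_, _, rfl⟩))
          (Subgroup.subset_closure ⟨_, _, rfl⟩)) n
    · intro h
      have := conj_map_comm_le (Coprod.inr b⁻¹) (fun a b' => by
        have : (MulAut.conj (Coprod.inr b⁻¹ : Coprod A B)) ⁅(Coprod.inl a : Coprod A B), Coprod.inr b'⁆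
            = ⁅(Coprod.inl a : Coprod A B), Coprod.inr b⁻¹⁆⁻¹ *
              ⁅(Coprod.inl a : Coprod A B), Coprod.inr (b⁻¹ * b')⁆ := by
          simp only [MulAut.conj_apply, commutatorElement_def, map_mul]
          group
        rw [this]
        exact mul_mem (inv_mem (Subgroup.subset_closure ⟨_, _, rfl⟩))
          (Subgroup.subset_closure ⟨_, _, rfl⟩)) _ h
      simpa [mul_assoc] using this

/-- The projection to the direct product. -/
def projProd (A B : Type*) [Group A] [Group B] : Coprod A B →* A × B :=
  Coprod.lift (MonoidHom.inl A B) (MonoidHom.inr A B)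

theorem ker_projProd_le_comm : (projProd A B).ker ≤ commSubgroup A B := by
  intro x hx
  have hcomm : ∀ (a : A) (b : B),
      Commute ((QuotientGroup.mk' (commSubgroup A B)) (Coprod.inl a))
        ((QuotientGroup.mk' (commSubgroup A B)) (Coprod.inr b)) := by
    intro a b
    rw [← commutatorElement_eq_one_iff_commute, ← map_commutatorElement,
      QuotientGroup.mk'_apply, QuotientGroup.eq_one_iff]
    exact Subgroup.subset_closure ⟨a, b, rfl⟩
  set σ : A × B →* Coprod A B ⧸ commSubgroup A B :=
    MonoidHom.noncommCoprod ((QuotientGroup.mk' _).comp Coprod.inl)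
      ((QuotientGroup.mk' _).comp Coprod.inr) hcomm with hσ
  have hfac : σ.comp (projProd A B) = QuotientGroup.mk' (commSubgroup A B) := by
    apply Coprod.hom_ext
    · ext a
      simp [hσ, projProd, MonoidHom.noncommCoprod]
    · ext b
      simp [hσ, projProd, MonoidHom.noncommCoprod]
  rw [← QuotientGroup.eq_one_iff, ← QuotientGroup.mk'_apply, ← hfac]
  simp [MonoidHom.mem_ker.mp hx]

end Aux

/-- The `k`-solvable product of solvable groups of derived lengths `m` and `n` is a
solvable group of derived length at most `max {k, m, n}`. -/
theorem solvableProduct_isSolvable {A B : Type*} [Group A] [Group B] (k m n : ℕ)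
    (hk : 1 ≤ k)
    (hm : derivedSeries A m = ⊥ ∧ ∀ l, derivedSeries A l = ⊥ → m ≤ l)
    (hn : derivedSeries B n = ⊥ ∧ ∀ l, derivedSeries B l = ⊥ → n ≤ l) :
    IsSolvable (VerbalProduct {sWord k} A B) ∧
    derivedSeries (VerbalProduct {sWord k} A B) (max k (max m n)) = ⊥ := by
  set N := max k (max m n) with hN
  have h1 : derivedSeries (Coprod A B) N ≤ verbalSubgroup {sWord k} (Coprod A B) :=
    (derivedSeries_antitone' (le_max_left _ _)).trans (derivedSeries_le_verbal k hk)
  have h2 : derivedSeries (Coprod A B) N ≤ commSubgroup A B := by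
    intro x hx
    apply ker_projProd_le_comm
    rw [MonoidHom.mem_ker]
    have hA : ((MonoidHom.fst A B).comp (projProd A B)) x ∈ derivedSeries A N :=
      map_derivedSeries_le_derivedSeries _ N ⟨x, hx, rfl⟩
    have hB : ((MonoidHom.snd A B).comp (projProd A B)) x ∈ derivedSeries B N :=
      map_derivedSeries_le_derivedSeries _ N ⟨x, hx, rfl⟩
    have hAbot : derivedSeries A N = ⊥ :=
      le_bot_iff.mp (hm.1 ▸ derivedSeries_antitone' ((le_max_left m n).trans (le_max_right _ _)))
    have hBbot : derivedSeries B N = ⊥ :=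
      le_bot_iff.mp (hn.1 ▸ derivedSeries_antitone' ((le_max_right m n).trans (le_max_right _ _)))
    rw [hAbot, Subgroup.mem_bot] at hA
    rw [hBbot, Subgroup.mem_bot] at hB
    exact Prod.ext hA hB
  have h3 : derivedSeries (Coprod A B) N ≤ verbalProductKer {sWord k} A B := fun x hx =>
    Subgroup.subset_normalClosure (Subgroup.mem_inf.mpr ⟨h1 hx, h2 hx⟩)
  have hsurj : Function.Surjective (vq {sWord k} A B) := QuotientGroup.mk'_surjective _
  have hmap : (derivedSeries (Coprod A B) N).map (vq {sWord k} A B) =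
      derivedSeries (VerbalProduct {sWord k} A B) N := map_derivedSeries_eq hsurj N
  have hbot : derivedSeries (VerbalProduct {sWord k} A B) N = ⊥ := by
    rw [← hmap, Subgroup.map_eq_bot_iff]
    refine h3.trans ?_
    rw [vq, QuotientGroup.ker_mk']
  exact ⟨⟨⟨N, hbot⟩⟩, hbot⟩
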